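/- Let G be a connected graph, A ⪰ 0 a d×d matrix, p ∈ [1,∞], and suppose 𝓔_p(G;A) := inf{ ‖(u_iᵀ A u_i)_{i∈V}‖_p : u a unit-distance representation of G in ℝ^d } is finite. Then the infimum is attained: there is a unit-distance representation u of G in ℝ^d with ‖(u_iᵀ A u_i)_i‖_p = 𝓔_p(G;A). -/

import Mathlib

open scoped RealInnerProductSpace

def IsUnitDistRep {V : Type*} (G : SimpleGraph V) {d : ℕ}
    (u : V → EuclideanSpace ℝ (Fin d)) : Prop :=
  ∀ i j, G.Adj i j → ‖u i - u j‖ = 1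

def IsHypersphereRep {V : Type*} (G : SimpleGraph V) {d : ℕ}
    (u : V → EuclideanSpace ℝ (Fin d)) (t : ℝ) : Prop :=
  IsUnitDistRep G u ∧ ∀ i, ‖u i‖ ^ 2 = t

noncomputable def hypersphereNumber {V : Type*} (G : SimpleGraph V) : ℝ :=
  sInf {t | ∃ (d : ℕ) (u : V → EuclideanSpace ℝ (Fin d)), IsHypersphereRep G u t}

open Matrix

open scoped ENNReal

/-- The objective `‖(uᵢᵀ A uᵢ)_{i∈V}‖_p`. -/
noncomputable def objP {V : Type*} [Fintype V] (p : ℝ≥0∞) [Fact (1 ≤ p)] {d : ℕ}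
    (A : Matrix (Fin d) (Fin d) ℝ) (u : V → EuclideanSpace ℝ (Fin d)) : ℝ :=
  ‖(WithLp.equiv p (∀ _ : V, ℝ)).symm
    (fun i => dotProduct (WithLp.equiv 2 (Fin d → ℝ) (u i))
      (A *ᵥ WithLp.equiv 2 (Fin d → ℝ) (u i)))‖

/-! ### Auxiliary material -/

/-- The quadratic form `x ↦ xᵀ A x` on `EuclideanSpace`. -/
noncomputable def quadF {d : ℕ} (A : Matrix (Fin d) (Fin d) ℝ)
    (x : EuclideanSpace ℝ (Fin d)) : ℝ :=
  dotProduct (WithLp.equiv 2 (Fin d → ℝ) x) (A *ᵥ WithLp.equiv 2 (Fin d → ℝ) x)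

lemma objP_eq {V : Type*} [Fintype V] (p : ℝ≥0∞) [Fact (1 ≤ p)] {d : ℕ}
    (A : Matrix (Fin d) (Fin d) ℝ) (u : V → EuclideanSpace ℝ (Fin d)) :
    objP p A u = ‖(WithLp.equiv p (∀ _ : V, ℝ)).symm (fun i => quadF A (u i))‖ := rfl

lemma quadF_continuous {d : ℕ} (A : Matrix (Fin d) (Fin d) ℝ) :
    Continuous (quadF A) := by
  have he : Continuous (WithLp.equiv 2 (Fin d → ℝ)) := PiLp.continuous_ofLp _ _
  unfold quadF dotProduct Matrix.mulVec
  apply continuous_finset_sum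
  intro i _
  exact ((continuous_apply i).comp he).mul (continuous_finset_sum _ fun j _ =>
    (continuous_const.mul ((continuous_apply j).comp he)))

lemma quadF_nonneg {d : ℕ} {A : Matrix (Fin d) (Fin d) ℝ} (hA : A.PosSemidef)
    (x : EuclideanSpace ℝ (Fin d)) : 0 ≤ quadF A x := by
  simpa [quadF] using hA.dotProduct_mulVec_nonneg (WithLp.equiv 2 (Fin d → ℝ) x)

lemma quadF_eq_zero_iff {d : ℕ} {A : Matrix (Fin d) (Fin d) ℝ} (hA : A.PosSemidef)
    (x : EuclideanSpace ℝ (Fin d)) :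
    quadF A x = 0 ↔ A *ᵥ WithLp.equiv 2 (Fin d → ℝ) x = 0 := by
  simpa [quadF] using hA.dotProduct_mulVec_zero_iff (WithLp.equiv 2 (Fin d → ℝ) x)

lemma quadF_smul {d : ℕ} (A : Matrix (Fin d) (Fin d) ℝ) (c : ℝ)
    (x : EuclideanSpace ℝ (Fin d)) : quadF A (c • x) = c ^ 2 * quadF A x := by
  simp only [quadF, WithLp.equiv_apply, WithLp.ofLp_smul, smul_dotProduct, mulVec_smul, dotProduct_smul,
    smul_eq_mul]
  ring

lemma quadF_sub_of_ker {d : ℕ} {A : Matrix (Fin d) (Fin d) ℝ} (hA : A.PosSemidef)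
    (x c : EuclideanSpace ℝ (Fin d)) (hc : A *ᵥ WithLp.equiv 2 (Fin d → ℝ) c = 0) :
    quadF A (x - c) = quadF A x := by
  have hsym : Aᵀ = A := by
    have := hA.1
    rwa [Matrix.IsHermitian, conjTranspose_eq_transpose_of_trivial] at this
  have hvc : (WithLp.equiv 2 (Fin d → ℝ) c) ᵥ* A = 0 := by
    rw [← mulVec_transpose, hsym, hc]
  simp only [quadF, WithLp.equiv_apply, WithLp.ofLp_sub] at hc hvc ⊢
  rw [sub_dotProduct, mulVec_sub, dotProduct_sub, dotProduct_sub, hc,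
    dotProduct_mulVec, dotProduct_mulVec, hvc]
  simp

lemma coord_le_norm {V : Type*} [Fintype V] (p : ℝ≥0∞) [Fact (1 ≤ p)]
    (x : V → ℝ) (i : V) : |x i| ≤ ‖(WithLp.equiv p (∀ _ : V, ℝ)).symm x‖ := by
  have hp1 : 1 ≤ p := Fact.out
  rcases eq_or_ne p ∞ with rfl | htop
  · rw [PiLp.norm_eq_ciSup]
    simpa [WithLp.equiv_symm_apply, PiLp.toLp_apply] using
      le_ciSup (f := fun j => ‖((WithLp.equiv ∞ (∀ _ : V, ℝ)).symm x) j‖)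
        (Set.Finite.bddAbove (Set.finite_range _)) i
  · have hp0 : 0 < p.toReal :=
      ENNReal.toReal_pos (by positivity) htop
    rw [PiLp.norm_eq_sum hp0]
    have h1 : |x i| ^ p.toReal ≤ ∑ j, ‖((WithLp.equiv p (∀ _ : V, ℝ)).symm x) j‖ ^ p.toReal := by
      simpa [WithLp.equiv_symm_apply, PiLp.toLp_apply, Real.norm_eq_abs] using
        Finset.single_le_sum (f := fun j => |x j| ^ p.toReal)
          (fun j _ => Real.rpow_nonneg (abs_nonneg _) _) (Finset.mem_univ i)
    calc |x i| = (|x i| ^ p.toReal) ^ (1 / p.toReal) := by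
          rw [← Real.rpow_mul (abs_nonneg _), mul_one_div, div_self hp0.ne', Real.rpow_one]
      _ ≤ _ := Real.rpow_le_rpow (Real.rpow_nonneg (abs_nonneg _) _) h1 (by positivity)

lemma quadF_le_objP {V : Type*} [Fintype V] (p : ℝ≥0∞) [Fact (1 ≤ p)] {d : ℕ}
    {A : Matrix (Fin d) (Fin d) ℝ}
    (u : V → EuclideanSpace ℝ (Fin d)) (i : V) : quadF A (u i) ≤ objP p A u := by
  rw [objP_eq]
  calc quadF A (u i) ≤ |quadF A (u i)| := le_abs_self _
    _ ≤ _ := coord_le_norm p (fun j => quadF A (u j)) i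

lemma objP_continuous {V : Type*} [Fintype V] (p : ℝ≥0∞) [Fact (1 ≤ p)] {d : ℕ}
    (A : Matrix (Fin d) (Fin d) ℝ) :
    Continuous fun u : V → EuclideanSpace ℝ (Fin d) => objP p A u := by
  simp only [objP_eq]
  apply Continuous.norm
  show Continuous ((WithLp.equiv p (∀ _ : V, ℝ)).symm ∘
    fun (u : V → EuclideanSpace ℝ (Fin d)) (i : V) => quadF A (u i))
  exact (PiLp.continuous_toLp p (fun _ : V => ℝ)).comp
    (continuous_pi fun i => (quadF_continuous A).comp (continuous_apply i))

lemma objP_sub_ker {V : Type*} [Fintype V] (p : ℝ≥0∞) [Fact (1 ≤ p)] {d : ℕ}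
    {A : Matrix (Fin d) (Fin d) ℝ} (hA : A.PosSemidef)
    (u : V → EuclideanSpace ℝ (Fin d)) (c : EuclideanSpace ℝ (Fin d))
    (hc : A *ᵥ WithLp.equiv 2 (Fin d → ℝ) c = 0) :
    objP p A (fun i => u i - c) = objP p A u := by
  rw [objP_eq, objP_eq]
  congr 1
  exact congrArg _ (funext fun i => quadF_sub_of_ker hA (u i) c hc)

lemma exists_eps {d : ℕ} {A : Matrix (Fin d) (Fin d) ℝ} (hA : A.PosSemidef) :
    ∃ ε > (0:ℝ), ∀ x ∈ (LinearMap.ker (Matrix.toEuclideanLin A))ᗮ,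
      ε * ‖x‖ ^ 2 ≤ quadF A x := by
  set K₀ := LinearMap.ker (Matrix.toEuclideanLin A)
  set S : Set (EuclideanSpace ℝ (Fin d)) := Metric.sphere 0 1 ∩ (K₀ᗮ : Set _)
  have hq0 : quadF A 0 = 0 := by simp [quadF]
  by_cases hS : S.Nonempty
  · have hcpt : IsCompact S :=
      (isCompact_sphere (0 : EuclideanSpace ℝ (Fin d)) 1).inter_right
        K₀ᗮ.closed_of_finiteDimensional
    obtain ⟨x₀, hx₀S, hmin⟩ := hcpt.exists_isMinOn hS (quadF_continuous A).continuousOn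
    have hx₀n : ‖x₀‖ = 1 := by simpa using hx₀S.1
    have hεpos : 0 < quadF A x₀ := by
      rcases (quadF_nonneg hA x₀).lt_or_eq with h | h
      · exact h
      · exfalso
        have hker : x₀ ∈ K₀ := by
          rw [LinearMap.mem_ker, Matrix.toEuclideanLin_apply,
            show x₀.ofLp = WithLp.equiv 2 (Fin d → ℝ) x₀ from rfl,
            (quadF_eq_zero_iff hA x₀).mp h.symm]
          simp
        have : x₀ = 0 := by
          have := Submodule.mem_inf.mpr ⟨hker, hx₀S.2⟩
          rwa [Submodule.inf_orthogonal_eq_bot, Submodule.mem_bot] at this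
        rw [this] at hx₀n; simp at hx₀n
    refine ⟨quadF A x₀, hεpos, fun x hx => ?_⟩
    rcases eq_or_ne x 0 with rfl | hx0
    · simp [hq0]
    · have hxn : ‖x‖ ≠ 0 := norm_ne_zero_iff.mpr hx0
      have hy : (‖x‖⁻¹ • x) ∈ S := by
        constructor
        · simp [norm_smul, abs_of_nonneg (inv_nonneg.mpr (norm_nonneg x)),
            inv_mul_cancel₀ hxn]
        · exact Submodule.smul_mem _ _ hx
      have hval : quadF A (‖x‖⁻¹ • x) = (‖x‖⁻¹) ^ 2 * quadF A x := quadF_smul A _ x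
      have h3 : quadF A x₀ ≤ (‖x‖⁻¹) ^ 2 * quadF A x := by
        have := hmin hy; simpa [hval] using this
      have h2 : 0 < ‖x‖ ^ 2 := by positivity
      calc quadF A x₀ * ‖x‖ ^ 2 ≤ ((‖x‖⁻¹) ^ 2 * quadF A x) * ‖x‖ ^ 2 := by
            exact mul_le_mul_of_nonneg_right h3 h2.le
        _ = quadF A x := by field_simp
  · refine ⟨1, one_pos, fun x hx => ?_⟩
    rcases eq_or_ne x 0 with rfl | hx0
    · simp [hq0]
    · exact absurd ⟨‖x‖⁻¹ • x, by
        simp [S, norm_smul, abs_of_nonneg (inv_nonneg.mpr (norm_nonneg x)),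
          inv_mul_cancel₀ (norm_ne_zero_iff.mpr hx0)], Submodule.smul_mem _ _ hx⟩ hS

lemma walk_norm_bound {V : Type*} {G : SimpleGraph V} {d : ℕ}
    {u : V → EuclideanSpace ℝ (Fin d)} (hu : ∀ i j, G.Adj i j → ‖u i - u j‖ = 1)
    {i j : V} (w : G.Walk i j) : ‖u i - u j‖ ≤ (w.length : ℝ) := by
  induction w with
  | nil => simp
  | @cons a b c hab w ih =>
    calc ‖u a - u c‖ ≤ ‖u a - u b‖ + ‖u b - u c‖ := norm_sub_le_norm_sub_add_norm_sub _ _ _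
      _ ≤ 1 + (w.length : ℝ) := add_le_add (le_of_eq (hu _ _ hab)) ih
      _ = (((SimpleGraph.Walk.cons hab w).length : ℕ) : ℝ) := by
          rw [SimpleGraph.Walk.length_cons]; push_cast; ring

/-- If `𝓔_p(G;A)` is finite (some unit-distance representation of the connected graph `G`
exists in `ℝ^d`), then the infimum is attained. -/
theorem ellipsoid_attained {V : Type*} [Fintype V] (G : SimpleGraph V)
    (hG : G.Connected) {d : ℕ} (A : Matrix (Fin d) (Fin d) ℝ) (hA : A.PosSemidef)
    (p : ℝ≥0∞) [Fact (1 ≤ p)]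
    (hne : {r : ℝ | ∃ u : V → EuclideanSpace ℝ (Fin d),
      IsUnitDistRep G u ∧ r = objP p A u}.Nonempty) :
    ∃ u : V → EuclideanSpace ℝ (Fin d), IsUnitDistRep G u ∧
      objP p A u = sInf {r : ℝ | ∃ u' : V → EuclideanSpace ℝ (Fin d),
        IsUnitDistRep G u' ∧ r = objP p A u'} := by
  classical
  haveI : Nonempty V := hG.nonempty
  obtain ⟨ε, hε, hεQ⟩ := exists_eps hA
  set K₀ := LinearMap.ker (Matrix.toEuclideanLin A) with hK₀
  let i₀ : V := Classical.arbitrary V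
  have hbdd : BddBelow {r : ℝ | ∃ u' : V → EuclideanSpace ℝ (Fin d),
      IsUnitDistRep G u' ∧ r = objP p A u'} := by
    refine ⟨0, fun r hr => ?_⟩
    obtain ⟨u', _, rfl⟩ := hr
    exact norm_nonneg _
  obtain ⟨r₀, u₀, hu₀, hr₀⟩ := hne
  have translate : ∀ u' : V → EuclideanSpace ℝ (Fin d), IsUnitDistRep G u' →
      ∃ u'' : V → EuclideanSpace ℝ (Fin d), IsUnitDistRep G u'' ∧ u'' i₀ ∈ K₀ᗮ ∧
        objP p A u'' = objP p A u' := by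
    intro u' hu'
    set c : EuclideanSpace ℝ (Fin d) :=
      (K₀.orthogonalProjectionOnto (u' i₀) : EuclideanSpace ℝ (Fin d)) with hcdef
    have hcK : c ∈ K₀ := SetLike.coe_mem _
    have hc : A *ᵥ WithLp.equiv 2 (Fin d → ℝ) c = 0 := by
      have h := hcK
      rw [hK₀, LinearMap.mem_ker, Matrix.toEuclideanLin_apply] at h
      simpa using congrArg (WithLp.equiv 2 (Fin d → ℝ)) h
    refine ⟨fun i => u' i - c, fun i j h => ?_, ?_, objP_sub_ker p hA u' c hc⟩
    · rw [sub_sub_sub_cancel_right]; exact hu' i j h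
    · exact K₀.sub_starProjection_mem_orthogonal _
  obtain ⟨u₁, hu₁, hu₁K, hobj₁⟩ := translate u₀ hu₀
  have hobj₁' : objP p A u₁ = r₀ := hobj₁.trans hr₀.symm
  set Kset : Set (V → EuclideanSpace ℝ (Fin d)) :=
    {u | IsUnitDistRep G u ∧ u i₀ ∈ K₀ᗮ ∧ objP p A u ≤ r₀} with hKsetdef
  have hmem₁ : u₁ ∈ Kset := ⟨hu₁, hu₁K, le_of_eq hobj₁'⟩
  have hcont : Continuous fun u : V → EuclideanSpace ℝ (Fin d) => objP p A u :=
    objP_continuous p A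
  have h1 : IsClosed {u : V → EuclideanSpace ℝ (Fin d) | IsUnitDistRep G u} := by
    have : {u : V → EuclideanSpace ℝ (Fin d) | IsUnitDistRep G u} =
        ⋂ i, ⋂ j, ⋂ (_ : G.Adj i j), {u : V → EuclideanSpace ℝ (Fin d) | ‖u i - u j‖ = 1} := by
      ext u; simp [IsUnitDistRep]
    rw [this]
    exact isClosed_iInter fun i => isClosed_iInter fun j => isClosed_iInter fun _ =>
      isClosed_eq (((continuous_apply i).sub (continuous_apply j)).norm) continuous_const
  have h2 : IsClosed {u : V → EuclideanSpace ℝ (Fin d) | u i₀ ∈ K₀ᗮ} :=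
    K₀ᗮ.closed_of_finiteDimensional.preimage (continuous_apply i₀)
  have h3 : IsClosed {u : V → EuclideanSpace ℝ (Fin d) | objP p A u ≤ r₀} :=
    isClosed_le hcont continuous_const
  have hclosed : IsClosed Kset := by
    have : Kset = {u : V → EuclideanSpace ℝ (Fin d) | IsUnitDistRep G u} ∩
        ({u | u i₀ ∈ K₀ᗮ} ∩ {u | objP p A u ≤ r₀}) := rfl
    rw [this]
    exact h1.inter (h2.inter h3)
  have hnorm0 : ∀ u ∈ Kset, ‖u i₀‖ ≤ Real.sqrt (r₀ / ε) := by
    intro u hu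
    have hq : quadF A (u i₀) ≤ r₀ := (quadF_le_objP p u i₀).trans hu.2.2
    have hq1 : ε * ‖u i₀‖ ^ 2 ≤ r₀ := (hεQ _ hu.2.1).trans hq
    have hq2 : ‖u i₀‖ ^ 2 ≤ r₀ / ε := by
      rw [le_div_iff₀ hε]; linarith [hq1]
    calc ‖u i₀‖ = Real.sqrt (‖u i₀‖ ^ 2) := (Real.sqrt_sq (norm_nonneg _)).symm
      _ ≤ _ := Real.sqrt_le_sqrt hq2
  have hsub : Kset ⊆ Set.pi Set.univ fun i =>
      Metric.closedBall (0 : EuclideanSpace ℝ (Fin d))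
        (Real.sqrt (r₀ / ε) + ((hG.preconnected i i₀).some.length : ℝ)) := by
    intro u hu i _
    rw [Metric.mem_closedBall, dist_zero_right]
    have hwb : ‖u i - u i₀‖ ≤ ((hG.preconnected i i₀).some.length : ℝ) :=
      walk_norm_bound hu.1 _
    calc ‖u i‖ = ‖(u i - u i₀) + u i₀‖ := by rw [sub_add_cancel]
      _ ≤ ‖u i - u i₀‖ + ‖u i₀‖ := norm_add_le _ _
      _ ≤ ((hG.preconnected i i₀).some.length : ℝ) + Real.sqrt (r₀ / ε) :=
          add_le_add hwb (hnorm0 u hu)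
      _ = _ := add_comm _ _
  have hKcpt : IsCompact Kset :=
    IsCompact.of_isClosed_subset
      (isCompact_univ_pi fun i => isCompact_closedBall _ _) hclosed hsub
  obtain ⟨ustar, hustar, hminOn⟩ := hKcpt.exists_isMinOn ⟨u₁, hmem₁⟩ hcont.continuousOn
  refine ⟨ustar, hustar.1, ?_⟩
  apply le_antisymm
  · refine le_csInf ⟨r₀, u₀, hu₀, hr₀⟩ fun r hr => ?_
    obtain ⟨u', hu', rfl⟩ := hr
    by_cases hle : objP p A u' ≤ r₀
    · obtain ⟨u'', hu'', hK'', hobj''⟩ := translate u' hu'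
      have hm : u'' ∈ Kset := ⟨hu'', hK'', hobj''.le.trans hle⟩
      calc objP p A ustar ≤ objP p A u'' := isMinOn_iff.mp hminOn u'' hm
        _ = objP p A u' := hobj''
    · calc objP p A ustar ≤ objP p A u₁ := isMinOn_iff.mp hminOn u₁ hmem₁
        _ = r₀ := hobj₁'
        _ ≤ objP p A u' := (not_le.mp hle).le
  · exact csInf_le hbdd ⟨ustar, hustar.1, rfl⟩
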